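/- Let γ denote the standard Gaussian probability measure on ℝ (mean 0, variance 1), let n ≥ 1, and let a, b : Fin n → ℝ. Suppose there is an index i* with a i* = max_{i} a i and an index j with b j ≠ b i*. Then ∫_ℝ max_{i} (a i + b i · z) dγ(z) > max_{i} a i. -/

import Mathlib

open MeasureTheory ProbabilityTheory

/-- The standard Gaussian probability measure on ℝ (mean 0, variance 1). -/
noncomputable def stdGaussian : Measure ℝ := gaussianReal 0 1


open Real NNReal

lemma stdGaussian_eq : _root_.stdGaussian = volume.withDensity (gaussianPDF 0 1) :=
  gaussianReal_of_var_ne_zero 0 one_ne_zero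

instance : IsProbabilityMeasure stdGaussian := by
  unfold _root_.stdGaussian; infer_instance

lemma integrable_id_stdGaussian : Integrable (fun z : ℝ => z) stdGaussian := by
  rw [stdGaussian_eq,
    integrable_withDensity_iff (measurable_gaussianPDF 0 1)
      (ae_of_all _ fun x => ENNReal.ofReal_lt_top)]
  have h1 : Integrable (fun x : ℝ => x * Real.exp (-(2 * (1:ℝ))⁻¹ * x ^ 2)) volume :=
    integrable_mul_exp_neg_mul_sq (by norm_num)
  have h2 := h1.const_mul (Real.sqrt (2 * π))⁻¹
  refine h2.congr (ae_of_all _ fun x => ?_)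
  simp only [gaussianPDF_def]
  rw [ENNReal.toReal_ofReal (gaussianPDFReal_nonneg _ _ _), gaussianPDFReal]
  push_cast
  ring_nf

lemma stdGaussian_map_neg : stdGaussian.map (fun x : ℝ => -1 * x) = _root_.stdGaussian := by
  show (gaussianReal 0 1).map ((-1 : ℝ) * ·) = gaussianReal 0 1
  rw [gaussianReal_map_const_mul (-1)]
  have h1 : NNReal.mk ((-1:ℝ)^2) (sq_nonneg _) = 1 := by ext; norm_num
  rw [h1]
  norm_num

lemma integral_id_stdGaussian : ∫ z, z ∂stdGaussian = 0 := by
  have h : ∫ z, z ∂stdGaussian = - ∫ z, z ∂stdGaussian := by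
    conv_lhs => rw [← stdGaussian_map_neg]
    rw [integral_map (f := fun z : ℝ => z) (φ := fun x : ℝ => -1 * x) (by fun_prop) aestronglyMeasurable_id]
    simp only [neg_one_mul]
    exact integral_neg _
  linarith

lemma integrable_affine_stdGaussian (p q : ℝ) :
    Integrable (fun z : ℝ => p + q * z) stdGaussian :=
  (integrable_const p).add (integrable_id_stdGaussian.const_mul q)

lemma integrable_finset_sup' {ι : Type*} (s : Finset ι) (f : ι → ℝ → ℝ)
    (hf : ∀ i, Integrable (f i) stdGaussian) :
    ∀ (hs : s.Nonempty), Integrable (fun z => s.sup' hs (fun i => f i z)) stdGaussian := by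
  induction s using Finset.cons_induction with
  | empty => intro hs; simp at hs
  | cons i s hi ih =>
    intro hs
    rcases s.eq_empty_or_nonempty with rfl | hs'
    · simpa using hf i
    · have heq : (fun z => (Finset.cons i s hi).sup' hs (fun k => f k z))
          = fun z => (f i z) ⊔ (s.sup' hs' fun k => f k z) := by
        funext z
        exact Finset.sup'_cons hs' _
      rw [heq]
      exact (hf i).sup (ih hs')

instance : stdGaussian.IsOpenPosMeasure :=
  (gaussianReal_absolutelyContinuous' 0 one_ne_zero).isOpenPosMeasure

/-- if some maximizing intercept index `i*` has a slope differing from some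
other slope `b j`, then the Gaussian expectation of the maximum of the affine functions
strictly exceeds the maximum intercept. -/
theorem stmt_2 (n : ℕ) (hn : 1 ≤ n) (a b : Fin n → ℝ) (istar : Fin n)
    (hstar : a istar = Finset.univ.sup' ⟨⟨0, hn⟩, Finset.mem_univ _⟩ a)
    (j : Fin n) (hj : b j ≠ b istar) :
    (∫ z, Finset.univ.sup' ⟨⟨0, hn⟩, Finset.mem_univ _⟩ (fun i => a i + b i * z)
        ∂stdGaussian) >
      Finset.univ.sup' ⟨⟨0, hn⟩, Finset.mem_univ _⟩ a := by
  have hne : (Finset.univ : Finset (Fin n)).Nonempty := ⟨⟨0, hn⟩, Finset.mem_univ _⟩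
  set M : ℝ := Finset.univ.sup' ⟨⟨0, hn⟩, Finset.mem_univ _⟩ a with hM
  set c : ℝ := b istar with hc
  set e : ℝ := b j - c with he
  have hce : e ≠ 0 := sub_ne_zero.mpr hj
  set h : ℝ → ℝ := fun z => max 0 ((a j - M) + e * z) with hh
  have hL : Integrable (fun z : ℝ => M + c * z) stdGaussian := integrable_affine_stdGaussian M c
  have hint_h : Integrable h stdGaussian :=
    (integrable_const (0 : ℝ)).sup (integrable_affine_stdGaussian (a j - M) e)
  have hg : Integrable (fun z => Finset.univ.sup' hne (fun i => a i + b i * z)) stdGaussian :=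
    integrable_finset_sup' _ _ (fun i => integrable_affine_stdGaussian _ _) hne
  have hpt : ∀ z : ℝ, M + c * z + h z ≤ Finset.univ.sup' hne (fun i => a i + b i * z) := by
    intro z
    have e1 : a istar + b istar * z ≤ Finset.univ.sup' hne (fun i => a i + b i * z) :=
      Finset.le_sup' (fun i => a i + b i * z) (Finset.mem_univ istar)
    have e2 : a j + b j * z ≤ Finset.univ.sup' hne (fun i => a i + b i * z) :=
      Finset.le_sup' (fun i => a i + b i * z) (Finset.mem_univ j)
    have hmax : M + c * z + h z
        = max (M + c * z + 0) (M + c * z + ((a j - M) + e * z)) := by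
      rw [hh]; exact (max_add_add_left _ _ _).symm
    rw [hmax]
    refine max_le ?_ ?_
    · have : M + c * z + 0 = a istar + b istar * z := by rw [← hstar, hc]; ring
      rw [this]; exact e1
    · have : M + c * z + ((a j - M) + e * z) = a j + b j * z := by rw [he, hc]; ring
      rw [this]; exact e2
  have key : ∫ z, (M + c * z + h z) ∂stdGaussian
      ≤ ∫ z, Finset.univ.sup' hne (fun i => a i + b i * z) ∂stdGaussian :=
    integral_mono (hL.add hint_h) hg hpt
  have hsplit : ∫ z, (M + c * z + h z) ∂stdGaussian = M + ∫ z, h z ∂stdGaussian := by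
    rw [integral_add hL hint_h,
      integral_add (integrable_const M) (integrable_id_stdGaussian.const_mul c),
      integral_const, integral_const_mul, integral_id_stdGaussian]
    simp
  have hpos : 0 < ∫ z, h z ∂stdGaussian := by
    have hnn : (0 : ℝ → ℝ) ≤ h := fun z => le_max_left _ _
    rw [integral_pos_iff_support_of_nonneg hnn hint_h]
    have hSopen : IsOpen {z : ℝ | 0 < (a j - M) + e * z} :=
      isOpen_lt continuous_const (by fun_prop)
    have hSne : Set.Nonempty {z : ℝ | 0 < (a j - M) + e * z} := by
      refine ⟨(1 - (a j - M)) / e, ?_⟩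
      have : e * ((1 - (a j - M)) / e) = 1 - (a j - M) := by field_simp
      simp only [Set.mem_setOf_eq, this]
      linarith
    have hsub : {z : ℝ | 0 < (a j - M) + e * z} ⊆ Function.support h := fun z hz =>
      ne_of_gt (lt_of_lt_of_le hz (le_max_right _ _))
    exact lt_of_lt_of_le (hSopen.measure_pos stdGaussian hSne) (measure_mono hsub)
  calc M < M + ∫ z, h z ∂stdGaussian := by linarith
  _ = ∫ z, (M + c * z + h z) ∂stdGaussian := hsplit.symm
  _ ≤ _ := key
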